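/- Let W be a module and Γ as defined by Γ(x,a,y,b,z) := {ω | ∃ α ∈ a, β ∈ b, ω + α ∈ z, ω + α + β ∈ y, ω + β ∈ x}. Then for all submodules x, a, b, z of W: Γ(x,a,x,b,z) = (z ⊔ (x ⊓ a)) ⊓ (b ⊔ x), where ⊔ and ⊓ are sum and intersection of submodules. -/
import Mathlib


/-- The quintary Grassmannian product:
`Γ(x,a,y,b,z) = {ω | ∃ α ∈ a, ∃ β ∈ b, ω + α ∈ z ∧ ω + α + β ∈ y ∧ ω + β ∈ x}`,
as a submodule of `W`. -/
def Gamma {R : Type*} [Ring R] {W : Type*} [AddCommGroup W] [Module R W]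
    (x a y b z : Submodule R W) : Submodule R W where
  carrier := {ω : W | ∃ α ∈ a, ∃ β ∈ b, ω + α ∈ z ∧ ω + α + β ∈ y ∧ ω + β ∈ x}
  zero_mem' := ⟨0, a.zero_mem, 0, b.zero_mem, by simp, by simp, by simp⟩
  add_mem' := by
    rintro ω ω' ⟨α, hα, β, hβ, h1, h2, h3⟩ ⟨α', hα', β', hβ', h1', h2', h3'⟩
    refine ⟨α + α', a.add_mem hα hα', β + β', b.add_mem hβ hβ', ?_, ?_, ?_⟩
    · rw [show ω + ω' + (α + α') = (ω + α) + (ω' + α') by abel]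
      exact z.add_mem h1 h1'
    · rw [show ω + ω' + (α + α') + (β + β') = (ω + α + β) + (ω' + α' + β') by abel]
      exact y.add_mem h2 h2'
    · rw [show ω + ω' + (β + β') = (ω + β) + (ω' + β') by abel]
      exact x.add_mem h3 h3'
  smul_mem' := by
    rintro c ω ⟨α, hα, β, hβ, h1, h2, h3⟩
    refine ⟨c • α, a.smul_mem c hα, c • β, b.smul_mem c hβ, ?_, ?_, ?_⟩
    · rw [← smul_add]; exact z.smul_mem c h1
    · rw [show c • ω + c • α + c • β = c • (ω + α + β) by rw [smul_add, smul_add]]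
      exact y.smul_mem c h2
    · rw [← smul_add]; exact x.smul_mem c h3

/-- Diagonal value on `x = y`: `Γ(x,a,x,b,z) = (z ⊔ (x ⊓ a)) ⊓ (b ⊔ x)`. -/
theorem Gamma_diagonal_x_eq_y {R : Type*} [Ring R] {W : Type*} [AddCommGroup W]
    [Module R W] (x a b z : Submodule R W) :
    Gamma x a x b z = (z ⊔ (x ⊓ a)) ⊓ (b ⊔ x) := by
  ext ω
  constructor
  · rintro ⟨α, hα, β, hβ, h1, h2, h3⟩
    constructor
    · have hαx : α ∈ x := by
        have := x.sub_mem h2 h3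
        simpa [show ω + α + β - (ω + β) = α by abel] using this
      have : ω = (ω + α) + (-α) := by abel
      rw [this]
      exact Submodule.add_mem _ (Submodule.mem_sup_left h1)
        (Submodule.mem_sup_right ⟨x.neg_mem hαx, a.neg_mem hα⟩)
    · have : ω = β + (ω + β) + (-β - β) := by abel
      have h : ω = (-β) + (ω + β) := by abel
      rw [h]
      exact Submodule.add_mem _ (Submodule.mem_sup_left (b.neg_mem hβ))
        (Submodule.mem_sup_right h3)
  · rintro ⟨h1, h2⟩
    obtain ⟨u, hu, v, hv, huv⟩ := Submodule.mem_sup.mp h1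
    obtain ⟨β', hβ', w, hw, hbw⟩ := Submodule.mem_sup.mp h2
    refine ⟨-v, a.neg_mem hv.2, -β', b.neg_mem hβ', ?_, ?_, ?_⟩
    · rw [show ω + -v = u by rw [← huv]; abel]; exact hu
    · rw [show ω + -v + -β' = (-v) + w by rw [← hbw]; abel]
      exact x.add_mem (x.neg_mem hv.1) hw
    · rw [show ω + -β' = w by rw [← hbw]; abel]; exact hw
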